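/- arXiv:2408.09166 — 4 statements merged into one kernel-verified Lean document; each statement's English description precedes it below -/
import Mathlib

section
/- In the ring of formal power series ℚ[[x]], one has (1−2x)²·(1−x³)·(1−x²)²·(Σ_{n≥0} dsv(n)·xⁿ) = x⁵ − 2x⁶ + x⁷ (= x⁵(1−x)²). -/
/-- The indices (0-based) of symmetric valleys of a list of naturals. -/
def symValleyIdx (L : List ℕ) : Finset ℕ :=
  (Finset.range L.length).filter (fun i =>
    i + 2 < L.length ∧ L.getD i 0 > L.getD (i+1) 0 ∧ L.getD i 0 = L.getD (i+2) 0)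

/-- `dsv π`: the sum of the depths of the symmetric valleys of `π`. -/
def dsvL (L : List ℕ) : ℕ := ∑ i ∈ symValleyIdx L, (L.getD i 0 - L.getD (i+1) 0)

/-- `dsv(n)`: the total sum of depths of symmetric valleys over all compositions of `n`. -/
def dsvN (n : ℕ) : ℕ := ∑ c : Composition n, dsvL c.blocks

def FL : ℕ → Finset (List ℕ)
  | 0 => {[]}
  | n+1 => (Finset.range (n+1)).attach.biUnion fun j =>
      (FL j.1).image (fun L => (n+1-(j:ℕ)) :: L)
  decreasing_by exact Finset.mem_range.mp j.2

lemma mem_FL {n : ℕ} {L : List ℕ} : L ∈ FL n ↔ L.sum = n ∧ ∀ x ∈ L, 0 < x := by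
  induction n using Nat.strong_induction_on generalizing L with
  | _ n ih =>
    match n with
    | 0 =>
      simp only [FL, Finset.mem_singleton]
      constructor
      · rintro rfl; simp
      · rintro ⟨hs, hp⟩
        cases L with
        | nil => rfl
        | cons a t => exfalso; have := hp a (by simp); simp at hs; omega
    | n+1 =>
      simp only [FL, Finset.mem_biUnion, Finset.mem_attach, Finset.mem_image, true_and,
        Subtype.exists, Finset.mem_range]
      constructor
      · rintro ⟨j, hj, L', hL', rfl⟩
        rw [ih j hj] at hL'
        refine ⟨by simp [hL'.1]; omega, ?_⟩
        intro x hx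
        rcases List.mem_cons.mp hx with rfl | hx
        · omega
        · exact hL'.2 x hx
      · rintro ⟨hs, hp⟩
        cases L with
        | nil => simp at hs
        | cons a t =>
          have ha : 0 < a := hp a (by simp)
          have hat : a + t.sum = n+1 := by simpa using hs
          refine ⟨n+1-a, by omega, t, ?_, ?_⟩
          · rw [ih (n+1-a) (by omega)]
            exact ⟨by omega, fun x hx => hp x (by simp [hx])⟩
          · congr 1; omega

lemma sum_FL_decomp {n : ℕ} (hn : 0 < n) (f : List ℕ → ℕ) :
    ∑ L ∈ FL n, f L = ∑ m ∈ Finset.Icc 1 n, ∑ L ∈ FL (n - m), f (m :: L) := by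
  have key : FL n = (Finset.Icc 1 n).biUnion fun m => (FL (n-m)).image (fun L => m :: L) := by
    ext L
    simp only [mem_FL, Finset.mem_biUnion, Finset.mem_Icc, Finset.mem_image]
    constructor
    · rintro ⟨hs, hp⟩
      cases L with
      | nil => exfalso; simp at hs; omega
      | cons a t =>
        have ha : 0 < a := hp a (by simp)
        have hat : a + t.sum = n := by simpa using hs
        exact ⟨a, ⟨ha, by omega⟩, t, ⟨by omega, fun x hx => hp x (by simp [hx])⟩, rfl⟩
    · rintro ⟨m, ⟨hm1, hm2⟩, t, ht, rfl⟩
      constructor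
      · simp [ht.1]; omega
      · intro x hx
        rcases List.mem_cons.mp hx with rfl | hx
        · omega
        · exact ht.2 x hx
  rw [key, Finset.sum_biUnion, ]
  · refine Finset.sum_congr rfl fun m _ => ?_
    rw [Finset.sum_image]
    intro x _ y _ h
    simpa using h
  · intro a ha b hb hab
    simp only [Finset.disjoint_left, Finset.mem_image]
    rintro _ ⟨x, _, rfl⟩ ⟨y, _, h⟩
    exact hab (by simpa using (List.cons.injEq _ _ _ _ ▸ congrArg id h : _).1 ▸ rfl)

lemma comp_sum (n : ℕ) (f : List ℕ → ℕ) :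
    ∑ c : Composition n, f c.blocks = ∑ L ∈ FL n, f L := by
  apply Finset.sum_bij (fun c _ => c.blocks)
  · intro c _
    exact mem_FL.mpr ⟨c.blocks_sum, fun x hx => c.blocks_pos hx⟩
  · intro a _ b _ h
    exact Composition.ext h
  · intro L hL
    rw [mem_FL] at hL
    exact ⟨⟨L, fun {x} hx => hL.2 x hx, hL.1⟩, Finset.mem_univ _, rfl⟩
  · intro _ _; rfl

def extraD (m : ℕ) (L : List ℕ) : ℕ :=
  if 2 ≤ L.length ∧ L.getD 0 0 < m ∧ m = L.getD 1 0 then m - L.getD 0 0 else 0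

lemma dsvL_cons (m : ℕ) (L : List ℕ) : dsvL (m :: L) = dsvL L + extraD m L := by
  unfold dsvL symValleyIdx
  rw [Finset.sum_filter, Finset.sum_filter]
  simp only [List.length_cons]
  rw [Finset.sum_range_succ']
  congr 1
  · refine Finset.sum_congr rfl fun i _ => ?_
    simp only [List.getD_cons_succ]
    congr 1
    simp only [eq_iff_iff]
    omega
  · simp only [List.getD_cons_succ, List.getD_cons_zero, extraD]
    congr 1
    simp only [eq_iff_iff]
    constructor
    · rintro ⟨h1, h2, h3⟩; exact ⟨by omega, h2, h3⟩
    · rintro ⟨h1, h2, h3⟩; exact ⟨by omega, h2, h3⟩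

def compN (n : ℕ) : ℕ := (FL n).card

def dsvS (n : ℕ) : ℕ := ∑ L ∈ FL n, dsvL L

def EN (n : ℕ) : ℕ := ∑ m ∈ Finset.Icc 1 n, ∑ L ∈ FL (n-m), extraD m L

lemma dsvN_eq_dsvS (n : ℕ) : dsvN n = dsvS n := comp_sum n dsvL

lemma compN_eq (n : ℕ) : compN n = 2 ^ (n - 1) := by
  have h := comp_sum n (fun _ => 1)
  simp only [Finset.sum_const, smul_eq_mul, mul_one] at h
  rw [compN, ← h, ← composition_card, Finset.card_univ]

lemma dsvS_zero : dsvS 0 = 0 := by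
  have : FL 0 = {[]} := by rw [FL]
  simp [dsvS, this, dsvL, symValleyIdx]

lemma dsvS_rec (n : ℕ) : dsvS n = (∑ j ∈ Finset.range n, dsvS j) + EN n := by
  rcases Nat.eq_zero_or_pos n with rfl | hn
  · simp [dsvS_zero, EN]
  rw [dsvS, sum_FL_decomp hn, EN]
  have : ∀ m ∈ Finset.Icc 1 n, ∑ L ∈ FL (n-m), dsvL (m :: L)
      = dsvS (n-m) + ∑ L ∈ FL (n-m), extraD m L := by
    intro m _
    rw [dsvS, ← Finset.sum_add_distrib]
    exact Finset.sum_congr rfl fun L _ => dsvL_cons m L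
  rw [Finset.sum_congr rfl this, Finset.sum_add_distrib]
  congr 1
  apply Finset.sum_nbij' (i := fun m => n - m) (j := fun j => n - j) <;>
    simp_all (config := {contextual := true}) [Finset.mem_Icc, Finset.mem_range] <;> omega

lemma count_head (k m : ℕ) (hm : 1 ≤ m) :
    (∑ t ∈ FL k, if t.getD 0 0 = m then 1 else 0) = if m ≤ k then compN (k - m) else 0 := by
  rcases Nat.eq_zero_or_pos k with rfl | hk
  · have h0 : FL 0 = {[]} := by rw [FL]
    have h1 : (([] : List ℕ).getD 0 0) = 0 := rfl
    rw [h0, Finset.sum_singleton, h1, if_neg (by omega), if_neg (by omega)]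
  rw [sum_FL_decomp hk]
  have : ∀ m' ∈ Finset.Icc 1 k, (∑ t ∈ FL (k - m'), if (m' :: t).getD 0 0 = m then 1 else 0)
      = if m' = m then compN (k - m') else 0 := by
    intro m' _
    simp only [List.getD_cons_zero]
    split_ifs with h
    · rw [Finset.sum_const, smul_eq_mul, mul_one, compN]
    · simp
  rw [Finset.sum_congr rfl this, Finset.sum_ite_eq' (Finset.Icc 1 k) m (fun m' => compN (k - m'))]
  simp only [Finset.mem_Icc]
  split_ifs <;> simp_all

lemma T_eval (m k : ℕ) (hm : 1 ≤ m) :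
    ∑ L ∈ FL k, extraD m L
      = ∑ b ∈ Finset.Icc 1 k, if b < m ∧ b + m ≤ k then (m - b) * compN (k - b - m) else 0 := by
  rcases Nat.eq_zero_or_pos k with rfl | hk
  · have h0 : FL 0 = {[]} := by rw [FL]
    rw [h0, Finset.sum_singleton, show Finset.Icc 1 0 = ∅ from rfl, Finset.sum_empty, extraD,
      if_neg (by simp)]
  rw [sum_FL_decomp hk]
  refine Finset.sum_congr rfl fun b hb => ?_
  simp only [Finset.mem_Icc] at hb
  have step : ∀ t ∈ FL (k - b), extraD m (b :: t)
      = if b < m then (if t.getD 0 0 = m then m - b else 0) else 0 := by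
    intro t ht
    rw [extraD]
    simp only [List.length_cons, List.getD_cons_zero, List.getD_cons_succ]
    by_cases hbm : b < m
    · by_cases hh : t.getD 0 0 = m
      · have hne : t ≠ [] := by
          intro h; rw [h] at hh; simp at hh; omega
        rw [if_pos ⟨by cases t with | nil => exact absurd rfl hne | cons a s => simp,
            hbm, hh.symm⟩, if_pos hbm, if_pos hh]
      · rw [if_neg (by tauto), if_pos hbm, if_neg hh]
    · rw [if_neg (by tauto), if_neg hbm]
  rw [Finset.sum_congr rfl step]
  by_cases hbm : b < m
  · simp only [if_pos hbm]
    have : (∑ t ∈ FL (k-b), if t.getD 0 0 = m then m - b else 0)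
        = (m - b) * ∑ t ∈ FL (k-b), if t.getD 0 0 = m then 1 else 0 := by
      rw [Finset.mul_sum]
      refine Finset.sum_congr rfl fun t _ => ?_
      split_ifs <;> simp
    rw [this, count_head _ _ hm]
    by_cases hle : b + m ≤ k
    · rw [if_pos (by omega : m ≤ k - b), if_pos ⟨hbm, hle⟩]
    · have h1 : ¬ m ≤ k - b := by omega
      have h2 : ¬(b < m ∧ b + m ≤ k) := by tauto
      rw [if_neg h1, if_neg h2]
      exact mul_zero _
  · simp only [if_neg hbm, Finset.sum_const_zero]
    rw [if_neg (by tauto)]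

def gN (n : ℕ) : ℕ :=
  ∑ m ∈ Finset.range (n+1), ∑ b ∈ Finset.range (n+1),
    if 1 ≤ b ∧ b < m ∧ 2*m+b = n then m - b else 0

lemma EN_eq (n : ℕ) : EN n = ∑ m ∈ Finset.range (n+1), ∑ b ∈ Finset.range (n+1),
    if 1 ≤ b ∧ b < m ∧ 2*m+b ≤ n then (m - b) * compN (n - (2*m+b)) else 0 := by
  rw [EN]
  rw [Finset.sum_congr rfl (fun m hm => T_eval m (n-m) (Finset.mem_Icc.mp hm).1)]
  have step1 : ∀ m ∈ Finset.Icc 1 n,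
      (∑ b ∈ Finset.Icc 1 (n-m), if b < m ∧ b + m ≤ n-m then (m - b) * compN (n-m-b-m) else 0)
      = ∑ b ∈ Finset.range (n+1),
          if 1 ≤ b ∧ b < m ∧ 2*m+b ≤ n then (m - b) * compN (n - (2*m+b)) else 0 := by
    intro m hm
    rw [Finset.mem_Icc] at hm
    rw [Finset.sum_congr rfl (fun b hb => ?_)]
    · apply Finset.sum_subset
      · intro b hb
        rw [Finset.mem_Icc] at hb
        rw [Finset.mem_range]
        omega
      · intro b _ hb
        rw [Finset.mem_Icc] at hb
        exact if_neg (by omega)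
    · rw [Finset.mem_Icc] at hb
      by_cases h : b < m ∧ b + m ≤ n - m
      · rw [if_pos h, if_pos (by omega)]
        congr 2
        omega
      · rw [if_neg h, if_neg (by omega)]
  rw [Finset.sum_congr rfl step1]
  apply Finset.sum_subset
  · intro m hm
    rw [Finset.mem_Icc] at hm
    rw [Finset.mem_range]
    omega
  · intro m _ hm
    rw [Finset.mem_Icc] at hm
    apply Finset.sum_eq_zero
    intro b _
    exact if_neg (by omega)

lemma EN_conv (n : ℕ) : EN n = ∑ k ∈ Finset.range (n+1), gN k * compN (n-k) := by
  have gN_ext : ∀ k ∈ Finset.range (n+1), gN k = ∑ m ∈ Finset.range (n+1),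
      ∑ b ∈ Finset.range (n+1), if 1 ≤ b ∧ b < m ∧ 2*m+b = k then m - b else 0 := by
    intro k hk
    rw [Finset.mem_range] at hk
    rw [gN]
    have inner : ∀ m ∈ Finset.range (k+1),
        (∑ b ∈ Finset.range (k+1), if 1 ≤ b ∧ b < m ∧ 2*m+b = k then m - b else 0)
        = ∑ b ∈ Finset.range (n+1), if 1 ≤ b ∧ b < m ∧ 2*m+b = k then m - b else 0 := by
      intro m _
      apply Finset.sum_subset
      · intro b hb; rw [Finset.mem_range] at *; omega
      · intro b _ hb; rw [Finset.mem_range] at hb; exact if_neg (by omega)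
    rw [Finset.sum_congr rfl inner]
    apply Finset.sum_subset
    · intro m hm; rw [Finset.mem_range] at *; omega
    · intro m _ hm; rw [Finset.mem_range] at hm
      exact Finset.sum_eq_zero fun b _ => if_neg (by omega)
  have ptw : ∀ m b : ℕ,
      (if 1 ≤ b ∧ b < m ∧ 2*m+b ≤ n then (m - b) * compN (n - (2*m+b)) else 0)
      = ∑ k ∈ Finset.range (n+1),
          (if 1 ≤ b ∧ b < m ∧ 2*m+b = k then m - b else 0) * compN (n-k) := by
    intro m b
    by_cases hQ : 1 ≤ b ∧ b < m
    · have e1 : ∀ k ∈ Finset.range (n+1),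
          (if 1 ≤ b ∧ b < m ∧ 2*m+b = k then m - b else 0) * compN (n-k)
          = if 2*m+b = k then (m - b) * compN (n-k) else 0 := by
        intro k _
        by_cases h : 2*m+b = k
        · rw [if_pos h, if_pos (by tauto)]
        · rw [if_neg h, if_neg (by tauto), zero_mul]
      rw [Finset.sum_congr rfl e1,
        Finset.sum_ite_eq (Finset.range (n+1)) (2*m+b) (fun k => (m - b) * compN (n-k))]
      simp only [Finset.mem_range]
      obtain ⟨hb1, hbm⟩ := hQ
      by_cases h2 : 2*m+b ≤ n
      · rw [if_pos ⟨hb1, hbm, h2⟩, if_pos (by omega)]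
      · rw [if_neg (fun hc => h2 hc.2.2), if_neg (by omega)]
    · have e1 : ∀ k ∈ Finset.range (n+1),
          (if 1 ≤ b ∧ b < m ∧ 2*m+b = k then m - b else 0) * compN (n-k) = 0 := by
        intro k _
        rw [if_neg (by tauto), zero_mul]
      rw [Finset.sum_eq_zero e1, if_neg (by tauto)]
  calc EN n = ∑ m ∈ Finset.range (n+1), ∑ b ∈ Finset.range (n+1),
        if 1 ≤ b ∧ b < m ∧ 2*m+b ≤ n then (m - b) * compN (n - (2*m+b)) else 0 := EN_eq n
    _ = ∑ m ∈ Finset.range (n+1), ∑ b ∈ Finset.range (n+1), ∑ k ∈ Finset.range (n+1),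
          (if 1 ≤ b ∧ b < m ∧ 2*m+b = k then m - b else 0) * compN (n-k) :=
        Finset.sum_congr rfl fun m _ => Finset.sum_congr rfl fun b _ => ptw m b
    _ = ∑ m ∈ Finset.range (n+1), ∑ k ∈ Finset.range (n+1), ∑ b ∈ Finset.range (n+1),
          (if 1 ≤ b ∧ b < m ∧ 2*m+b = k then m - b else 0) * compN (n-k) :=
        Finset.sum_congr rfl fun m _ => Finset.sum_comm
    _ = ∑ k ∈ Finset.range (n+1), ∑ m ∈ Finset.range (n+1), ∑ b ∈ Finset.range (n+1),
          (if 1 ≤ b ∧ b < m ∧ 2*m+b = k then m - b else 0) * compN (n-k) :=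
        Finset.sum_comm
    _ = ∑ k ∈ Finset.range (n+1), (∑ m ∈ Finset.range (n+1), ∑ b ∈ Finset.range (n+1),
          (if 1 ≤ b ∧ b < m ∧ 2*m+b = k then m - b else 0)) * compN (n-k) := by
        refine Finset.sum_congr rfl fun k _ => ?_
        rw [Finset.sum_mul]
        exact Finset.sum_congr rfl fun m _ => (Finset.sum_mul _ _ _).symm
    _ = ∑ k ∈ Finset.range (n+1), gN k * compN (n-k) :=
        Finset.sum_congr rfl fun k hk => by rw [gN_ext k hk]

def h3 (n : ℕ) : ℕ := if n ≠ 0 ∧ 3 ∣ n then 1 else 0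

def k2 (n : ℕ) : ℕ := if 2 ∣ n then n / 2 else 0

lemma gN_conv (n : ℕ) : gN n = ∑ k ∈ Finset.range (n+1), h3 k * k2 (n-k) := by
  have lhs_eq : gN n = ∑ b ∈ Finset.range (n+1),
      (if 1 ≤ b ∧ 3*b < n ∧ 2 ∣ (n-b) then (n-3*b)/2 else 0) := by
    rw [gN, Finset.sum_comm]
    refine Finset.sum_congr rfl fun b hb => ?_
    rw [Finset.mem_range] at hb
    by_cases hc : 1 ≤ b ∧ 3*b < n ∧ 2 ∣ (n-b)
    · rw [if_pos hc]
      rw [Finset.sum_eq_single ((n-b)/2)]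
      · rw [if_pos ⟨hc.1, by omega, by omega⟩]
        omega
      · intro m _ hm
        exact if_neg (by omega)
      · intro h
        exact absurd (Finset.mem_range.mpr (by omega)) h
    · rw [if_neg hc]
      exact Finset.sum_eq_zero fun m _ => if_neg (by omega)
  have rhs_eq : ∀ k, h3 k * k2 (n-k)
      = if 3 ∣ k ∧ 1 ≤ k ∧ 2 ∣ (n-k) then (n-k)/2 else 0 := by
    intro k
    rw [h3, k2]
    split_ifs <;> simp_all
  rw [lhs_eq, Finset.sum_congr rfl (fun k (_ : k ∈ Finset.range (n+1)) => rhs_eq k)]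
  rw [← Finset.sum_filter_of_ne (s := Finset.range (n+1))
      (f := fun b => if 1 ≤ b ∧ 3*b < n ∧ 2 ∣ (n-b) then (n-3*b)/2 else 0)
      (p := fun b => 1 ≤ b ∧ 3*b < n ∧ 2 ∣ (n-b))
      (by intro b _ hb; by_contra hc; exact hb (if_neg hc))]
  rw [← Finset.sum_filter_of_ne (s := Finset.range (n+1))
      (f := fun k => if 3 ∣ k ∧ 1 ≤ k ∧ 2 ∣ (n-k) then (n-k)/2 else 0)
      (p := fun k => 3 ∣ k ∧ 1 ≤ k ∧ 2 ∣ (n-k) ∧ k < n)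
      (by intro k _ hk
          by_cases hc : 3 ∣ k ∧ 1 ≤ k ∧ 2 ∣ (n-k)
          · refine ⟨hc.1, hc.2.1, hc.2.2, ?_⟩
            have h5 : (n-k)/2 ≠ 0 := fun h => hk ((if_pos hc).trans h)
            omega
          · exact absurd (if_neg hc) hk)]
  refine Finset.sum_nbij' (fun b => 3*b) (fun k => k/3) ?_ ?_ ?_ ?_ ?_
  · intro b hb
    simp only [Finset.mem_filter, Finset.mem_range] at *
    obtain ⟨hr, h1, h2, h4⟩ := hb
    exact ⟨by omega, by omega, by omega, by omega, by omega⟩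
  · intro k hk
    simp only [Finset.mem_filter, Finset.mem_range] at *
    obtain ⟨hr, h3k, h1, h2, hlt⟩ := hk
    obtain ⟨c, rfl⟩ := h3k
    refine ⟨by omega, by omega, by omega, by omega⟩
  · intro b _; show 3*b/3 = b; omega
  · intro k hk
    simp only [Finset.mem_filter, Finset.mem_range] at hk
    obtain ⟨hr, h3k, h1, h2, hlt⟩ := hk
    obtain ⟨c, rfl⟩ := h3k
    show 3*(3*c/3) = 3*c
    omega
  · intro b hb
    simp only [Finset.mem_filter, Finset.mem_range] at hb
    obtain ⟨hr, h1, h2, h4⟩ := hb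
    show _ = if 3 ∣ 3*b ∧ 1 ≤ 3*b ∧ 2 ∣ (n-3*b) then (n-3*b)/2 else 0
    rw [if_pos ⟨h1, h2, h4⟩, if_pos ⟨dvd_mul_right 3 b, by omega, by omega⟩]

def hdN (d n : ℕ) : ℕ := if n ≠ 0 ∧ d ∣ n then 1 else 0

lemma dsvS_conv (n : ℕ) :
    dsvS n = (∑ k ∈ Finset.range (n+1), dsvS k * hdN 1 (n-k)) + EN n := by
  rw [dsvS_rec n]
  congr 1
  rw [Finset.sum_range_succ]
  have h0 : hdN 1 (n-n) = 0 := by simp [hdN]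
  rw [h0, mul_zero, add_zero]
  refine (Finset.sum_congr rfl fun k hk => ?_).symm
  rw [Finset.mem_range] at hk
  have : hdN 1 (n-k) = 1 := by
    simp only [hdN]
    rw [if_pos ⟨by omega, one_dvd _⟩]
  rw [this, mul_one]

open PowerSeries in
lemma mk_mul_mk (a b : ℕ → ℕ) :
    (mk fun n => (a n : ℚ)) * (mk fun n => (b n : ℚ))
      = mk fun n => ((∑ k ∈ Finset.range (n+1), a k * b (n-k) : ℕ) : ℚ) := by
  ext n
  rw [coeff_mul, coeff_mk, Finset.Nat.sum_antidiagonal_eq_sum_range_succ_mk]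
  push_cast
  exact Finset.sum_congr rfl fun k _ => by rw [coeff_mk, coeff_mk]

open PowerSeries in
lemma key1 (d : ℕ) (hd1 : 1 ≤ d) (hdiv : ∀ a b : ℕ, d ∣ a → d ∣ b → b ≤ a → d ∣ (a - b))
    (hdvd : ∀ a : ℕ, d ∣ a → a ≠ 0 → d ≤ a) :
    (1 - (X : PowerSeries ℚ)^d) * mk (fun n => (hdN d n : ℚ)) = X^d := by
  ext n
  rw [sub_mul, one_mul, map_sub, coeff_X_pow_mul', coeff_mk, coeff_X_pow]
  by_cases h1 : d ≤ n
  · rw [if_pos h1, coeff_mk]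
    simp only [hdN]
    by_cases h2 : d ∣ n
    · have hn0 : n ≠ 0 := by omega
      rw [if_pos ⟨hn0, h2⟩]
      by_cases h3 : n = d
      · rw [if_pos h3, if_neg (by simp [h3])]
        norm_num
      · have : n - d ≠ 0 := by
          intro h
          have := hdvd n h2 hn0
          omega
        rw [if_pos ⟨this, hdiv n d h2 dvd_rfl h1⟩, if_neg h3]
        norm_num
    · have hnd : ¬ d ∣ (n - d) := fun h => h2 (by
        have := Nat.dvd_add h (dvd_refl d)
        rwa [Nat.sub_add_cancel h1] at this)
      rw [if_neg (by tauto), if_neg (by tauto), if_neg (by rintro rfl; exact h2 dvd_rfl)]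
      norm_num
  · rw [if_neg h1, if_neg (by omega)]
    simp only [hdN]
    by_cases h2 : n = 0
    · rw [if_neg (by tauto)]; norm_num
    · rw [if_neg (fun hc => h1 (hdvd n hc.2 h2))]; norm_num

open PowerSeries in
lemma key2 : (1 - (X : PowerSeries ℚ)^2) * mk (fun n => (k2 n : ℚ))
    = mk (fun n => (hdN 2 n : ℚ)) := by
  ext n
  rw [sub_mul, one_mul, map_sub, coeff_X_pow_mul', coeff_mk, coeff_mk]
  by_cases h1 : 2 ≤ n
  · rw [if_pos h1, coeff_mk]
    simp only [k2, hdN]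
    by_cases h2 : 2 ∣ n
    · rw [if_pos h2, if_pos (by omega), if_pos ⟨by omega, h2⟩]
      have : n / 2 = (n-2)/2 + 1 := by omega
      rw [this]
      push_cast
      ring
    · rw [if_neg h2, if_neg (by omega), if_neg (by tauto)]
      norm_num
  · rw [if_neg h1, coeff_mk]
    simp only [k2, hdN]
    by_cases h2 : n = 0
    · subst h2; norm_num
    · have : ¬ 2 ∣ n := by omega
      rw [if_neg this, if_neg (by tauto)]
      norm_num

open PowerSeries in
lemma key3 : (1 - 2 * (X : PowerSeries ℚ)) * mk (fun n => (compN n : ℚ)) = 1 - X := by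
  have h2C : (2 : PowerSeries ℚ) = C 2 := (map_ofNat _ 2).symm
  ext n
  have expand : (1 - 2 * (X : PowerSeries ℚ)) * mk (fun n => (compN n : ℚ))
      = mk (fun n => (compN n : ℚ)) - 2 * (X * mk (fun n => (compN n : ℚ))) := by ring
  rw [expand, map_sub, h2C, coeff_C_mul, coeff_mk]
  match n with
  | 0 =>
    have : (PowerSeries.coeff 0) (X * mk fun n => (compN n : ℚ)) = 0 := by
      rw [coeff_mul]
      simp
    rw [this, mul_zero, sub_zero]
    have c0 : compN 0 = 1 := by rw [compN, FL]; rfl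
    rw [c0, map_sub, coeff_one, PowerSeries.coeff_X]
    norm_num
  | (m+1) =>
    rw [coeff_succ_X_mul, coeff_mk, map_sub, coeff_one, PowerSeries.coeff_X]
    rw [compN_eq, compN_eq]
    match m with
    | 0 =>
      have c0 : compN 0 = 1 := by rw [compN, FL]; rfl
      norm_num
    | (k+1) =>
      simp only [Nat.add_sub_cancel]
      rw [if_neg (by omega), if_neg (by omega)]
      push_cast
      rw [pow_succ]
      ring

open PowerSeries in
/-- `(1−2x)²·(1−x³)·(1−x²)²·(Σ_{n≥0} dsv(n)·xⁿ) = x⁵ − 2x⁶ + x⁷` in `ℚ[[x]]`. -/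
theorem dsvN_generating_function :
    (1 - 2 * (X : PowerSeries ℚ))^2 * (1 - X^3) * (1 - X^2)^2 *
      PowerSeries.mk (fun n => (dsvN n : ℚ))
    = X^5 - 2 * X^6 + X^7 := by
  have hmk : PowerSeries.mk (fun n => (dsvN n : ℚ))
      = PowerSeries.mk (fun n => (dsvS n : ℚ)) := by
    ext n
    rw [PowerSeries.coeff_mk, PowerSeries.coeff_mk, dsvN_eq_dsvS]
  rw [hmk]
  set Fq : PowerSeries ℚ := mk (fun n => (dsvS n : ℚ)) with hFq
  set Aq : PowerSeries ℚ := mk (fun n => (compN n : ℚ)) with hAq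
  set Eq : PowerSeries ℚ := mk (fun n => (EN n : ℚ)) with hEq
  set Gq : PowerSeries ℚ := mk (fun n => (gN n : ℚ)) with hGq
  set Hq : PowerSeries ℚ := mk (fun n => (hdN 3 n : ℚ)) with hHq
  set Kq : PowerSeries ℚ := mk (fun n => (k2 n : ℚ)) with hKq
  set Jq : PowerSeries ℚ := mk (fun n => (hdN 1 n : ℚ)) with hJq
  set H2q : PowerSeries ℚ := mk (fun n => (hdN 2 n : ℚ)) with hH2q
  have hdiv : ∀ d a b : ℕ, d ∣ a → d ∣ b → b ≤ a → d ∣ (a - b) :=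
    fun d a b ha hb _ => Nat.dvd_sub ha hb
  have hdvd : ∀ d a : ℕ, d ∣ a → a ≠ 0 → d ≤ a :=
    fun d a ha h0 => Nat.le_of_dvd (Nat.pos_of_ne_zero h0) ha
  have h1 : (1 - 2 * (X : PowerSeries ℚ)) * Aq = 1 - X := key3
  have h3 : (1 - (X : PowerSeries ℚ)^1) * Jq = X^1 :=
    key1 1 le_rfl (hdiv 1) (hdvd 1)
  have h6 : (1 - (X : PowerSeries ℚ)^3) * Hq = X^3 :=
    key1 3 (by norm_num) (hdiv 3) (hdvd 3)
  have h8 : (1 - (X : PowerSeries ℚ)^2) * H2q = X^2 :=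
    key1 2 (by norm_num) (hdiv 2) (hdvd 2)
  have h7 : (1 - (X : PowerSeries ℚ)^2) * Kq = H2q := key2
  have h2 : Fq = Fq * Jq + Eq := by
    rw [hFq, hJq, hEq, mk_mul_mk]
    ext n
    rw [map_add, coeff_mk, coeff_mk, coeff_mk]
    exact_mod_cast dsvS_conv n
  have h4 : Eq = Gq * Aq := by
    rw [hEq, hGq, hAq, mk_mul_mk]
    ext n
    rw [coeff_mk, coeff_mk]
    exact_mod_cast EN_conv n
  have h5 : Gq = Hq * Kq := by
    rw [hGq, hHq, hKq, mk_mul_mk]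
    ext n
    rw [coeff_mk, coeff_mk]
    exact_mod_cast gN_conv n
  linear_combination
    ((1-2*X)*((1-X^3)*(1-X^2)^2)*(1-(X:PowerSeries ℚ))) * h2
    + ((1-2*X)*((1-X^3)*(1-X^2)^2)*Fq) * h3
    + ((1-(X:PowerSeries ℚ))*(1-2*X)*((1-X^3)*(1-X^2)^2)) * h4
    + ((1-(X:PowerSeries ℚ))*(1-2*X)*((1-X^3)*(1-X^2)^2)*Aq) * h5
    + ((1-(X:PowerSeries ℚ))*((1-X^3)*(1-X^2)^2)*Hq*Kq) * h1
    + ((1-(X:PowerSeries ℚ))^2*(1-X^2)^2*Kq) * h6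
    + ((1-(X:PowerSeries ℚ))^2*X^3*(1-X^2)) * h7
    + ((1-(X:PowerSeries ℚ))^2*X^3) * h8
end

section
/- For all integers n ≥ 0 and k ≥ 4, dsv(n,k) = (k−2) · Σ_{m=1}^{⌊(n−k+1)/3⌋} Σ_{b=m+1}^{⌊(n−m−(k−3))/2⌋} C(n−2b−m−1, k−4)·(b−m), where C(·,·) is the binomial coefficient and empty sums are 0. -/
/-- `dsv(n,k)`: the total sum of depths of symmetric valleys over all compositions of `n`
with exactly `k` parts. -/
def dsvNK (n k : ℕ) : ℕ :=
  ∑ c ∈ (Finset.univ : Finset (Composition n)).filter (fun c => c.length = k),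
    dsvL c.blocks


namespace DsvAux

/-- Compositions of `n` with `k` parts, as lists. -/
def comps : ℕ → ℕ → Finset (List ℕ)
  | n, 0 => if n = 0 then {[]} else ∅
  | n, (k+1) => (Finset.Icc 1 n).biUnion fun a => (comps (n - a) k).image (a :: ·)

lemma mem_comps : ∀ (k n : ℕ) (L : List ℕ),
    L ∈ comps n k ↔ L.sum = n ∧ L.length = k ∧ ∀ x ∈ L, 0 < x := by
  intro k
  induction k with
  | zero =>
    intro n L
    simp only [comps]
    split_ifs with h
    · subst h
      simp only [Finset.mem_singleton]
      constructor
      · rintro rfl; simp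
      · rintro ⟨_, h2, _⟩; exact List.length_eq_zero_iff.mp h2
    · simp only [Finset.notMem_empty, false_iff]
      rintro ⟨h1, h2, _⟩
      rw [List.length_eq_zero_iff.mp h2] at h1
      simp at h1
      exact h h1.symm
  | succ k ih =>
    intro n L
    simp only [comps, Finset.mem_biUnion, Finset.mem_image, Finset.mem_Icc]
    constructor
    · rintro ⟨a, ⟨ha1, ha2⟩, L', hL', rfl⟩
      obtain ⟨h1, h2, h3⟩ := (ih _ _).mp hL'
      refine ⟨by simp [h1]; omega, by simp [h2], ?_⟩
      intro x hx
      rcases List.mem_cons.mp hx with rfl | hx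
      · omega
      · exact h3 x hx
    · rintro ⟨h1, h2, h3⟩
      cases L with
      | nil => simp at h2
      | cons a L' =>
        have ha : 0 < a := h3 a (by simp)
        simp only [List.sum_cons] at h1
        exact ⟨a, ⟨ha, by omega⟩, L',
          (ih _ _).mpr ⟨by omega, by simpa using h2, fun x hx => h3 x (by simp [hx])⟩, rfl⟩

lemma sum_comps_succ (n k : ℕ) (f : List ℕ → ℕ) :
    ∑ L ∈ comps n (k+1), f L = ∑ a ∈ Finset.Icc 1 n, ∑ L ∈ comps (n-a) k, f (a :: L) := by
  show ∑ L ∈ (Finset.Icc 1 n).biUnion (fun a => (comps (n - a) k).image (a :: ·)), f L = _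
  rw [Finset.sum_biUnion]
  · refine Finset.sum_congr rfl fun a _ => ?_
    exact Finset.sum_image (fun x _ y _ h => by injection h)
  · intro a _ b _ hab
    simp only [Finset.disjoint_left, Finset.mem_image]
    rintro L ⟨L1, _, rfl⟩ ⟨L2, _, h⟩
    exact hab (by injection h with h1 _; exact h1.symm)

/-- Number of compositions of `n` with `k` parts. -/
def N (n k : ℕ) : ℕ := (comps n k).card

lemma N_succ (n k : ℕ) : N n (k+1) = ∑ a ∈ Finset.Icc 1 n, N (n-a) k := by
  simp only [N, Finset.card_eq_sum_ones]
  exact sum_comps_succ n k (fun _ => 1)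

lemma N_zero_right (n : ℕ) : N n 0 = if n = 0 then 1 else 0 := by
  simp only [N, comps]
  split_ifs <;> simp

lemma N_eq_zero {n k : ℕ} (h : n < k) : N n k = 0 := by
  rw [N, Finset.card_eq_zero, Finset.eq_empty_iff_forall_notMem]
  intro L hL
  obtain ⟨h1, h2, h3⟩ := (mem_comps _ _ _).mp hL
  have : L.length ≤ L.sum := by
    clear h1 h2 h hL
    induction L with
    | nil => simp
    | cons a L ihl =>
      simp only [List.length_cons, List.sum_cons]
      have := h3 a (by simp)
      have := ihl (fun x hx => h3 x (by simp [hx]))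
      omega
  omega

lemma sum_Icc_rev (n : ℕ) (f : ℕ → ℕ) :
    ∑ a ∈ Finset.Icc 1 n, f (n - a) = ∑ t ∈ Finset.range n, f t := by
  refine Finset.sum_nbij' (fun a => n - a) (fun t => n - t) ?_ ?_ ?_ ?_ (fun a _ => rfl) <;>
    simp only [Finset.mem_Icc, Finset.mem_range] <;> intros <;> omega

lemma hockey (s j : ℕ) : ∑ t ∈ Finset.range s, Nat.choose t j = Nat.choose s (j+1) := by
  induction s with
  | zero => simp
  | succ s ih => rw [Finset.sum_range_succ, ih, Nat.choose_succ_succ, Nat.add_comm]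

lemma N_succ_succ : ∀ (j s : ℕ), N (s+1) (j+1) = Nat.choose s j := by
  intro j
  induction j with
  | zero =>
    intro s
    rw [N_succ, sum_Icc_rev (s+1) (fun t => N t 0)]
    have : ∀ t ∈ Finset.range (s+1), N t 0 = if t = 0 then 1 else 0 :=
      fun t _ => N_zero_right t
    rw [Finset.sum_congr rfl this]
    simp
  | succ j ih =>
    intro s
    rw [N_succ, sum_Icc_rev (s+1) (fun t => N t (j+1))]
    have : ∀ t ∈ Finset.range (s+1), N t (j+1) =
        if t = 0 then 0 else Nat.choose (t-1) j := by
      intro t _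
      cases t with
      | zero => simp [N_eq_zero]
      | succ u => simp [ih u]
    rw [Finset.sum_congr rfl this, Finset.sum_range_succ']
    simp [hockey]


/-- Weight of position `i`: depth of a symmetric valley at `i`, else 0. -/
def wv (i : ℕ) (L : List ℕ) : ℕ :=
  if L.getD (i+1) 0 < L.getD i 0 ∧ L.getD i 0 = L.getD (i+2) 0
  then L.getD i 0 - L.getD (i+1) 0 else 0

lemma wv_eq_zero {i : ℕ} {L : List ℕ} (h : L.length ≤ i + 2) : wv i L = 0 := by
  rw [wv, if_neg]
  rintro ⟨h1, h2⟩
  rw [List.getD_eq_default _ _ h] at h2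
  omega

lemma wv_cons (i : ℕ) (a : ℕ) (L : List ℕ) : wv (i+1) (a :: L) = wv i L := by
  simp [wv, List.getD_cons_succ]

lemma dsvL_eq (L : List ℕ) (k : ℕ) (hk : L.length = k) :
    dsvL L = ∑ i ∈ Finset.range (k-2), wv i L := by
  rw [dsvL, symValleyIdx, Finset.sum_filter]
  subst hk
  have h1 : ∀ i ∈ Finset.range L.length,
      (if i + 2 < L.length ∧ L.getD (i+1) 0 < L.getD i 0 ∧ L.getD i 0 = L.getD (i+2) 0
        then L.getD i 0 - L.getD (i+1) 0 else 0) = wv i L := by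
    intro i _
    by_cases h : i + 2 < L.length
    · simp [wv, h, and_assoc]
    · rw [if_neg (by tauto), wv_eq_zero (by omega)]
  rw [Finset.sum_congr rfl h1]
  exact (Finset.sum_subset (Finset.range_subset_range.mpr (by omega))
    (fun i _ hi => wv_eq_zero (by simp at hi; omega))).symm

/-- The master double sum. -/
def G (n j : ℕ) : ℕ :=
  ∑ m ∈ Finset.Icc 1 n, ∑ b ∈ Finset.Icc 1 n,
    (if 2*b + m ≤ n then N (n - 2*b - m) j * (b - m) else 0)

lemma T_base (n j : ℕ) :
    ∑ L ∈ comps n (j+3), wv 0 L = G n j := by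
  rw [show j+3 = (j+2)+1 from rfl, sum_comps_succ]
  simp only [sum_comps_succ]
  have h1 : ∀ (b m c : ℕ) (R : List ℕ),
      wv 0 (b :: m :: c :: R) = if m < b ∧ b = c then b - m else 0 := by
    intro b m c R
    simp [wv, List.getD_cons_succ, List.getD_cons_zero]
  calc ∑ b ∈ Finset.Icc 1 n, ∑ m ∈ Finset.Icc 1 (n-b), ∑ c ∈ Finset.Icc 1 (n-b-m),
        ∑ R ∈ comps (n-b-m-c) j, wv 0 (b :: m :: c :: R)
      = ∑ b ∈ Finset.Icc 1 n, ∑ m ∈ Finset.Icc 1 (n-b),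
          (if 2*b + m ≤ n then N (n - 2*b - m) j * (b - m) else 0) := by
        refine Finset.sum_congr rfl fun b hb => Finset.sum_congr rfl fun m hm => ?_
        have e1 : ∀ c ∈ Finset.Icc 1 (n-b-m),
            (∑ R ∈ comps (n-b-m-c) j, wv 0 (b :: m :: c :: R))
            = if b = c then N (n-b-m-c) j * (b - m) else 0 := by
          intro c _
          rw [Finset.sum_congr rfl (fun R _ => h1 b m c R), Finset.sum_const,
            smul_eq_mul]
          by_cases hbc : b = c
          · by_cases hmb : m < b
            · rw [if_pos ⟨hmb, hbc⟩, if_pos hbc]; rfl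
            · rw [if_neg (by tauto), if_pos hbc, mul_zero,
                show b - m = 0 by omega, mul_zero]
          · rw [if_neg (by tauto), if_neg hbc, mul_zero]
        rw [Finset.sum_congr rfl e1, Finset.sum_ite_eq]
        simp only [Finset.mem_Icc, Finset.mem_Icc] at hb hm ⊢
        by_cases hc : 1 ≤ b ∧ b ≤ n - b - m
        · rw [if_pos hc, if_pos (by omega), show n-b-m-b = n-2*b-m by omega]
        · rw [if_neg hc, if_neg (by omega)]
    _ = ∑ b ∈ Finset.Icc 1 n, ∑ m ∈ Finset.Icc 1 n,
          (if 2*b + m ≤ n then N (n - 2*b - m) j * (b - m) else 0) := by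
        refine Finset.sum_congr rfl fun b hb => ?_
        simp only [Finset.mem_Icc] at hb
        refine Finset.sum_subset (Finset.Icc_subset_Icc le_rfl (by omega)) ?_
        intro m hm hm'
        simp only [Finset.mem_Icc] at hm hm'
        rw [if_neg (by omega)]
    _ = G n j := Finset.sum_comm

lemma G_step (n j : ℕ) :
    ∑ a ∈ Finset.Icc 1 n, G (n-a) j = G n (j+1) := by
  have h1 : ∀ a ∈ Finset.Icc 1 n, G (n-a) j =
      ∑ m ∈ Finset.Icc 1 n, ∑ b ∈ Finset.Icc 1 n,
        (if 2*b + m ≤ n - a then N (n - a - 2*b - m) j * (b - m) else 0) := by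
    intro a ha
    simp only [Finset.mem_Icc] at ha
    rw [G]
    calc ∑ m ∈ Finset.Icc 1 (n-a), ∑ b ∈ Finset.Icc 1 (n-a),
          (if 2*b + m ≤ n - a then N (n - a - 2*b - m) j * (b - m) else 0)
        = ∑ m ∈ Finset.Icc 1 (n-a), ∑ b ∈ Finset.Icc 1 n,
          (if 2*b + m ≤ n - a then N (n - a - 2*b - m) j * (b - m) else 0) := by
          refine Finset.sum_congr rfl fun m hm => ?_
          refine Finset.sum_subset (Finset.Icc_subset_Icc le_rfl (by omega)) ?_
          intro b hb hb'
          simp only [Finset.mem_Icc] at hb hb'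
          rw [if_neg (by omega)]
      _ = ∑ m ∈ Finset.Icc 1 n, ∑ b ∈ Finset.Icc 1 n,
          (if 2*b + m ≤ n - a then N (n - a - 2*b - m) j * (b - m) else 0) := by
          refine Finset.sum_subset (Finset.Icc_subset_Icc le_rfl (by omega)) ?_
          intro m hm hm'
          simp only [Finset.mem_Icc] at hm hm'
          refine Finset.sum_eq_zero fun b hb => ?_
          simp only [Finset.mem_Icc] at hb
          rw [if_neg (by omega)]
  rw [Finset.sum_congr rfl h1, Finset.sum_comm]
  refine Finset.sum_congr rfl fun m hm => ?_
  rw [Finset.sum_comm]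
  refine Finset.sum_congr rfl fun b hb => ?_
  simp only [Finset.mem_Icc] at hm hb
  by_cases hc : 2*b + m ≤ n
  · rw [if_pos hc, N_succ]
    have e2 : ∀ a ∈ Finset.Icc 1 n,
        (if 2*b + m ≤ n - a then N (n - a - 2*b - m) j * (b - m) else 0)
        = if a ≤ n - 2*b - m then N (n - 2*b - m - a) j * (b - m) else 0 := by
      intro a ha
      simp only [Finset.mem_Icc] at ha
      by_cases hca : 2*b + m ≤ n - a
      · rw [if_pos hca, if_pos (by omega), show n-a-2*b-m = n-2*b-m-a by omega]
      · rw [if_neg hca, if_neg (by omega)]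
    rw [Finset.sum_congr rfl e2, Finset.sum_mul]
    refine (Finset.sum_subset (Finset.Icc_subset_Icc le_rfl (by omega)) ?_).symm.trans
      (Finset.sum_congr rfl ?_)
    · intro a ha ha'
      simp only [Finset.mem_Icc] at ha ha'
      rw [if_neg (by omega)]
    · intro a ha
      simp only [Finset.mem_Icc] at ha
      rw [if_pos (by omega)]
  · rw [if_neg hc]
    refine Finset.sum_eq_zero fun a ha => ?_
    simp only [Finset.mem_Icc] at ha
    rw [if_neg (by omega)]

lemma T_eq : ∀ (i n k : ℕ), i + 3 ≤ k → ∑ L ∈ comps n k, wv i L = G n (k-3) := by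
  intro i
  induction i with
  | zero =>
    intro n k hk
    obtain ⟨j, rfl⟩ : ∃ j, k = j + 3 := ⟨k - 3, by omega⟩
    simpa using T_base n j
  | succ i ih =>
    intro n k hk
    obtain ⟨k', rfl⟩ : ∃ k', k = k' + 1 := ⟨k - 1, by omega⟩
    rw [sum_comps_succ]
    have h1 : ∀ a ∈ Finset.Icc 1 n,
        (∑ L ∈ comps (n-a) k', wv (i+1) (a :: L)) = G (n-a) (k'-3) := by
      intro a _
      rw [Finset.sum_congr rfl fun L _ => wv_cons i a L]
      exact ih (n-a) k' (by omega)
    rw [Finset.sum_congr rfl h1, G_step]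
    congr 1
    omega


lemma G_conv (n k : ℕ) (hk : 4 ≤ k) :
    G n (k-3) = ∑ m ∈ Finset.Icc 1 ((n - k + 1) / 3),
      ∑ b ∈ Finset.Icc (m + 1) ((n + 3 - m - k) / 2),
        Nat.choose (n - 2*b - m - 1) (k - 4) * (b - m) := by
  rw [G]
  calc ∑ m ∈ Finset.Icc 1 n, ∑ b ∈ Finset.Icc 1 n,
        (if 2*b + m ≤ n then N (n - 2*b - m) (k-3) * (b - m) else 0)
      = ∑ m ∈ Finset.Icc 1 ((n - k + 1) / 3), ∑ b ∈ Finset.Icc 1 n,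
        (if 2*b + m ≤ n then N (n - 2*b - m) (k-3) * (b - m) else 0) := by
        refine (Finset.sum_subset (Finset.Icc_subset_Icc le_rfl (by omega)) ?_).symm
        intro m hm hm'
        simp only [Finset.mem_Icc] at hm hm'
        refine Finset.sum_eq_zero fun b hb => ?_
        simp only [Finset.mem_Icc] at hb
        by_cases hc : 2*b + m ≤ n
        · rw [if_pos hc]
          rcases le_or_gt b m with hbm | hbm
          · rw [show b - m = 0 by omega, mul_zero]
          · rw [N_eq_zero (by omega), zero_mul]
        · rw [if_neg hc]
    _ = _ := by
        refine Finset.sum_congr rfl fun m hm => ?_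
        simp only [Finset.mem_Icc] at hm
        calc ∑ b ∈ Finset.Icc 1 n,
              (if 2*b + m ≤ n then N (n - 2*b - m) (k-3) * (b - m) else 0)
            = ∑ b ∈ Finset.Icc (m+1) ((n + 3 - m - k) / 2),
              (if 2*b + m ≤ n then N (n - 2*b - m) (k-3) * (b - m) else 0) := by
              refine (Finset.sum_subset (Finset.Icc_subset_Icc (by omega) (by omega)) ?_).symm
              intro b hb hb'
              simp only [Finset.mem_Icc] at hb hb'
              by_cases hc : 2*b + m ≤ n
              · rw [if_pos hc]
                rcases le_or_gt b m with hbm | hbm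
                · rw [show b - m = 0 by omega, mul_zero]
                · rw [N_eq_zero (by omega), zero_mul]
              · rw [if_neg hc]
          _ = _ := by
              refine Finset.sum_congr rfl fun b hb => ?_
              simp only [Finset.mem_Icc] at hb
              rw [if_pos (by omega), show n - 2*b - m = (n - 2*b - m - 1) + 1 by omega,
                show k - 3 = (k - 4) + 1 by omega, N_succ_succ, Nat.add_sub_cancel]

lemma sum_blocks (n k : ℕ) (f : List ℕ → ℕ) :
    ∑ c ∈ (Finset.univ : Finset (Composition n)).filter (fun c => c.length = k),
      f c.blocks = ∑ L ∈ comps n k, f L := by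
  refine Finset.sum_bij (fun c _ => c.blocks) ?_ ?_ ?_ ?_
  · intro c hc
    simp only [Finset.mem_filter] at hc
    exact (mem_comps _ _ _).mpr ⟨c.blocks_sum, hc.2, fun x hx => c.blocks_pos hx⟩
  · intro c1 _ c2 _ h
    cases c1; cases c2; simpa using h
  · intro L hL
    obtain ⟨h1, h2, h3⟩ := (mem_comps _ _ _).mp hL
    exact ⟨⟨L, @h3, h1⟩, by simp [Finset.mem_filter, Composition.length, h2], rfl⟩
  · intros; rfl

end DsvAux

open DsvAux in
/-- For `n ≥ 0` and `k ≥ 4`,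
`dsv(n,k) = (k−2)·Σ_{m=1}^{⌊(n−k+1)/3⌋} Σ_{b=m+1}^{⌊(n−m−(k−3))/2⌋} C(n−2b−m−1, k−4)·(b−m)`.
(All subtractions below are exact: within the summation ranges no natural-number
truncation occurs, and empty ranges give empty sums.) -/
theorem dsvNK_combinatorial (n k : ℕ) (hk : 4 ≤ k) :
    dsvNK n k =
      (k - 2) * ∑ m ∈ Finset.Icc 1 ((n - k + 1) / 3),
        ∑ b ∈ Finset.Icc (m + 1) ((n + 3 - m - k) / 2),
          Nat.choose (n - 2*b - m - 1) (k - 4) * (b - m) := by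
  rw [dsvNK, sum_blocks n k dsvL]
  rw [Finset.sum_congr rfl fun L hL =>
    dsvL_eq L k ((mem_comps _ _ _).mp hL).2.1]
  rw [Finset.sum_comm]
  rw [Finset.sum_congr rfl fun i hi =>
    T_eq i n k (by simp only [Finset.mem_range] at hi; omega)]
  rw [Finset.sum_const, Finset.card_range, smul_eq_mul, G_conv n k hk]
end

section
/- For every integer n ≥ 3, dsv(n,3) = Σ_{m=1}^{⌊(n−2)/3⌋} d_m, where d_m = (n−3m)/2 if n−m is even, and d_m = 0 otherwise. -/
lemma dsvL_triple (a b c : ℕ) :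
    dsvL [a, b, c] = if b < a ∧ a = c then a - b else 0 := by
  have h : symValleyIdx [a, b, c]
      = (Finset.range 3).filter (fun i =>
          i + 2 < 3 ∧ [a,b,c].getD i 0 > [a,b,c].getD (i+1) 0 ∧
            [a,b,c].getD i 0 = [a,b,c].getD (i+2) 0) := rfl
  rw [dsvL, h, show (Finset.range 3) = {0, 1, 2} by decide]
  by_cases hac : a = c
  · subst hac
    by_cases hba : b < a <;>
      simp [Finset.filter_insert, Finset.filter_singleton, hba, List.getD]
  · by_cases hba : b < a <;>
      simp [Finset.filter_insert, Finset.filter_singleton, hba, hac, List.getD]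

def Tset (n : ℕ) : Finset (ℕ × ℕ) :=
  (Finset.range (n+1) ×ˢ Finset.range (n+1)).filter
    (fun p => 1 ≤ p.1 ∧ 1 ≤ p.2 ∧ p.1 + p.2 + 1 ≤ n)

lemma mem_Tset {n : ℕ} {p : ℕ × ℕ} :
    p ∈ Tset n ↔ 1 ≤ p.1 ∧ 1 ≤ p.2 ∧ p.1 + p.2 + 1 ≤ n := by
  simp only [Tset, Finset.mem_filter, Finset.mem_product, Finset.mem_range]
  omega

lemma dsvNK3_eq (n : ℕ) :
    dsvNK n 3 = ∑ p ∈ Tset n,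
      (if p.2 < p.1 ∧ p.1 = n - p.1 - p.2 then p.1 - p.2 else 0) := by
  rw [dsvNK]
  refine Finset.sum_bij'
    (i := fun c _ => (c.blocks.getD 0 0, c.blocks.getD 1 0))
    (j := fun p hp => ⟨[p.1, p.2, n - p.1 - p.2], ?_, ?_⟩) ?_ ?_ ?_ ?_ ?_
  · intro i hi
    rw [mem_Tset] at hp
    simp only [List.mem_cons, List.not_mem_nil, or_false] at hi
    rcases hi with h | h | h <;> omega
  · rw [mem_Tset] at hp
    simp only [List.sum_cons, List.sum_nil]
    omega
  · intro c hc
    rw [Finset.mem_filter] at hc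
    obtain ⟨x, y, z, hb⟩ := List.length_eq_three.mp hc.2
    have hsum := c.blocks_sum
    have hx : 0 < x := c.blocks_pos (by rw [hb]; simp)
    have hy : 0 < y := c.blocks_pos (by rw [hb]; simp)
    have hz : 0 < z := c.blocks_pos (by rw [hb]; simp)
    rw [hb] at hsum
    simp only [List.sum_cons, List.sum_nil] at hsum
    simp only [mem_Tset, hb]
    simp [List.getD]
    omega
  · intro p hp
    rw [Finset.mem_filter]
    exact ⟨Finset.mem_univ _, rfl⟩
  · intro c hc
    rw [Finset.mem_filter] at hc
    obtain ⟨x, y, z, hb⟩ := List.length_eq_three.mp hc.2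
    have hsum := c.blocks_sum
    rw [hb] at hsum
    simp only [List.sum_cons, List.sum_nil] at hsum
    ext1
    simp [hb, List.getD]
    omega
  · intro p hp
    rw [mem_Tset] at hp
    simp [List.getD]
  · intro c hc
    rw [Finset.mem_filter] at hc
    obtain ⟨x, y, z, hb⟩ := List.length_eq_three.mp hc.2
    have hsum := c.blocks_sum
    rw [hb] at hsum
    simp only [List.sum_cons, List.sum_nil] at hsum
    have hx : 0 < x := c.blocks_pos (by rw [hb]; simp)
    have hy : 0 < y := c.blocks_pos (by rw [hb]; simp)
    have hzz : n - x - y = z := by omega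
    rw [hb, dsvL_triple]
    simp only [hb]
    simp [List.getD, hzz]

/-- For `n ≥ 3`, `dsv(n,3) = Σ_{m=1}^{⌊(n−2)/3⌋} d_m`, where `d_m = (n−3m)/2` if `n−m`
is even, and `d_m = 0` otherwise. -/
theorem dsvN3_combinatorial (n : ℕ) (hn : 3 ≤ n) :
    dsvNK n 3 =
      ∑ m ∈ Finset.Icc 1 ((n - 2) / 3),
        if (n - m) % 2 = 0 then (n - 3 * m) / 2 else 0 := by
  rw [dsvNK3_eq, Tset, Finset.sum_filter, Finset.sum_product_right]
  have step : ∀ m ∈ Finset.range (n+1),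
      (∑ a ∈ Finset.range (n+1),
        (if 1 ≤ a ∧ 1 ≤ m ∧ a + m + 1 ≤ n then
          (if m < a ∧ a = n - a - m then a - m else 0) else 0))
      = if 1 ≤ m ∧ m ≤ (n-2)/3 ∧ (n - m) % 2 = 0 then (n - 3*m)/2 else 0 := by
    intro m _
    by_cases h : 1 ≤ m ∧ m ≤ (n-2)/3 ∧ (n - m) % 2 = 0
    · rw [if_pos h]
      rw [Finset.sum_eq_single_of_mem ((n - m)/2) (by simp [Finset.mem_range]; omega)]
      · rw [if_pos (by omega), if_pos (by constructor <;> omega)]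
        omega
      · intro a _ hne
        split_ifs with h1 h2 <;> first | rfl | omega
    · rw [if_neg h]
      apply Finset.sum_eq_zero
      intro a _
      split_ifs with h1 h2 <;> first | rfl | omega
  rw [Finset.sum_congr rfl step]
  rw [← Finset.sum_subset (s₁ := Finset.Icc 1 ((n-2)/3)) (by
    intro m hm
    simp only [Finset.mem_Icc] at hm
    simp only [Finset.mem_range]
    omega)]
  · apply Finset.sum_congr rfl
    intro m hm
    simp only [Finset.mem_Icc] at hm
    by_cases hp : (n - m) % 2 = 0 <;> simp [hp, hm.1, hm.2]
  · intro m _ hm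
    simp only [Finset.mem_Icc, not_and, not_le] at hm
    split_ifs with h1 <;> first | rfl | omega
end

section
/- Fix a real p with 0 < p ≤ 1 and q = 1 − p, and let n ≥ 2 be an integer. Then Σ_{w ∈ (ℤ⁺)ⁿ} P(w)·sp(w) = (p²·q/(1−q³))·(n−2), where the sum over all words w of length n converges absolutely. In other words, the expected number of symmetric peaks in a sample of n geometric random variables is p²q(n−2)/(1−q³). -/
/-- The indices (0-based) of symmetric peaks of a list of naturals:
`i` is a symmetric peak if `L i < L (i+1)` and `L i = L (i+2)`. -/
def symPeakIdx (L : List ℕ) : Finset ℕ :=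
  (Finset.range L.length).filter (fun i =>
    i + 2 < L.length ∧ L.getD i 0 < L.getD (i+1) 0 ∧ L.getD i 0 = L.getD (i+2) 0)

/-- `sp w`: the number of symmetric peaks of `w`. -/
def spL (L : List ℕ) : ℕ := (symPeakIdx L).card

/-- The probability of the word `w` of length `n` with i.i.d. geometric letters:
`P(w) = ∏_{i} p·q^{wᵢ−1}`. -/
def wordP (p q : ℝ) {n : ℕ} (w : Fin n → ℕ+) : ℝ :=
  ∏ i : Fin n, p * q ^ ((w i : ℕ) - 1)

open scoped ENNReal

lemma getD_ofFn {m : ℕ} (w : Fin m → ℕ) {i : ℕ} (h : i < m) :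
    (List.ofFn w).getD i 0 = w ⟨i, h⟩ := by
  rw [List.getD_eq_getElem _ _ (by simpa using h), List.getElem_ofFn]

lemma spL_two (w : Fin 2 → ℕ) : spL (List.ofFn w) = 0 := by
  rw [spL, Finset.card_eq_zero, symPeakIdx, Finset.filter_eq_empty_iff]
  intro i _
  simp only [List.length_ofFn]
  omega

lemma spL_ofFn_cons (k : ℕ) (w : Fin (k+3) → ℕ) :
    spL (List.ofFn w) = spL (List.ofFn fun i : Fin (k+2) => w i.succ)
      + (if w 0 < w 1 ∧ w 0 = w 2 then 1 else 0) := by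
  have hbig : ∀ j (hj : j < k+3), (List.ofFn w).getD j 0 = w ⟨j, hj⟩ := fun j hj => getD_ofFn w hj
  have htail : ∀ j (hj : j < k+2),
      (List.ofFn fun i : Fin (k+2) => w i.succ).getD j 0 = w ⟨j+1, by omega⟩ :=
    fun j hj => by rw [getD_ofFn _ hj]; rfl
  unfold spL symPeakIdx
  rw [Finset.card_filter, Finset.card_filter]
  simp only [List.length_ofFn]
  rw [Finset.sum_range_succ']
  congr 1
  · apply Finset.sum_congr rfl
    intro i hi
    by_cases hc : i + 2 < k + 2
    · rw [hbig (i+1) (by omega), hbig (i+1+1) (by omega), hbig (i+1+2) (by omega),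
        htail i (by omega), htail (i+1) (by omega), htail (i+2) (by omega)]
      apply if_congr ?_ rfl rfl
      constructor
      · rintro ⟨-, h2, h3⟩; exact ⟨hc, h2, h3⟩
      · rintro ⟨-, h2, h3⟩; exact ⟨by omega, h2, h3⟩
    · rw [if_neg (by push_neg; intro h; omega), if_neg (by push_neg; intro h; omega)]
  · rw [hbig 0 (by omega), hbig (0+1) (by omega), hbig (0+2) (by omega)]
    apply if_congr ?_ rfl rfl
    constructor
    · rintro ⟨-, h2, h3⟩; exact ⟨h2, h3⟩
    · rintro ⟨h2, h3⟩; exact ⟨by omega, h2, h3⟩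

lemma spL_cons (k : ℕ) (a : ℕ) (v : Fin (k+2) → ℕ) :
    spL (List.ofFn (Fin.cons a v)) = spL (List.ofFn v)
      + (if a < v 0 ∧ a = v 1 then 1 else 0) := by
  have h := spL_ofFn_cons k (Fin.cons a v)
  simp only [Fin.cons_succ, Fin.cons_zero] at h
  rw [← Fin.succ_zero_eq_one, ← Fin.succ_one_eq_two, Fin.cons_succ, Fin.cons_succ] at h
  exact h

noncomputable def spG (p q : ℝ) (k : ℕ+) : ℝ≥0∞ := ENNReal.ofReal (p * q ^ ((k:ℕ) - 1))

noncomputable def spW (p q : ℝ) {m : ℕ} (w : Fin m → ℕ+) : ℝ≥0∞ := ∏ j, spG p q (w j)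

lemma spW_cons (p q : ℝ) {m : ℕ} (a : ℕ+) (v : Fin m → ℕ+) :
    spW p q (Fin.cons a v) = spG p q a * spW p q v := by
  rw [spW, Fin.prod_univ_succ, Fin.cons_zero]
  simp only [Fin.cons_succ, spW]

lemma tsum_peel {m : ℕ} (f : (Fin (m+1) → ℕ+) → ℝ≥0∞) :
    ∑' w : Fin (m+1) → ℕ+, f w = ∑' (a : ℕ+), ∑' (v : Fin m → ℕ+), f (Fin.cons a v) := by
  rw [← Equiv.tsum_eq (Fin.consEquiv fun _ => ℕ+) f]
  exact ENNReal.tsum_prod (f := fun a v => f (Fin.cons a v))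

section params
variable {p q : ℝ} (hp : 0 < p) (hq0 : 0 ≤ q) (hq1 : q < 1) (hpq : 1 - q = p)

include hp hq0 hq1 hpq

lemma tsum_spG : ∑' k : ℕ+, spG p q k = 1 := by
  rw [← Equiv.tsum_eq Equiv.pnatEquivNat.symm]
  have h1 : ∀ m : ℕ, spG p q (Equiv.pnatEquivNat.symm m) = ENNReal.ofReal (p * q ^ m) := by
    intro m
    simp [spG, Equiv.pnatEquivNat]
  rw [tsum_congr h1, ← ENNReal.ofReal_tsum_of_nonneg
    (fun m => by positivity) ((summable_geometric_of_lt_one hq0 hq1).mul_left p)]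
  rw [tsum_mul_left, tsum_geometric_of_lt_one hq0 hq1, hpq,
    mul_inv_cancel₀ hp.ne', ENNReal.ofReal_one]

lemma tsum_spW : ∀ m : ℕ, ∑' w : Fin m → ℕ+, spW p q w = 1 := by
  intro m
  induction m with
  | zero =>
      rw [tsum_eq_single (fun i => i.elim0) (fun b hb => absurd (Subsingleton.elim b _) hb)]
      simp [spW]
  | succ m ih =>
      rw [tsum_peel]
      simp only [spW_cons]
      rw [tsum_congr fun a => ENNReal.tsum_mul_left (a := spG p q a), tsum_congr fun a => by
        rw [ih, mul_one], tsum_spG hp hq0 hq1 hpq]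

lemma tsum_spG_gt (a : ℕ+) :
    ∑' b : ℕ+, (if a < b then spG p q b else 0) = ENNReal.ofReal (q ^ (a:ℕ)) := by
  have hinj : Function.Injective (fun m : ℕ => (⟨(a:ℕ)+m+1, by omega⟩ : ℕ+)) := by
    intro m1 m2 h
    have := congrArg (fun x : ℕ+ => (x:ℕ)) h
    simpa using this
  have hsupp : Function.support (fun b : ℕ+ => if a < b then spG p q b else 0) ⊆
      Set.range (fun m : ℕ => (⟨(a:ℕ)+m+1, by omega⟩ : ℕ+)) := by
    intro b hb
    simp only [Function.mem_support] at hb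
    have hab : a < b := by by_contra h; simp [h] at hb
    refine ⟨(b:ℕ) - (a:ℕ) - 1, ?_⟩
    have h2 : (a:ℕ) < (b:ℕ) := hab
    exact PNat.coe_injective (show (a:ℕ) + ((b:ℕ)-(a:ℕ)-1) + 1 = (b:ℕ) by omega)
  have key := Function.Injective.tsum_eq hinj
    (f := fun b : ℕ+ => if a < b then spG p q b else 0) hsupp
  have h1 : ∀ m : ℕ, (if a < (show ℕ+ from ⟨(a:ℕ)+m+1, by omega⟩) then spG p q ⟨(a:ℕ)+m+1, by omega⟩
      else 0) = ENNReal.ofReal (p * q ^ ((a:ℕ)+m)) := by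
    intro m
    have hlt : a < (⟨(a:ℕ)+m+1, by omega⟩ : ℕ+) := by
      change (a:ℕ) < (a:ℕ)+m+1; omega
    rw [if_pos hlt]
    simp [spG]
  have hnat : ∑' m : ℕ, (fun b : ℕ+ => if a < b then spG p q b else 0)
      ((fun m : ℕ => (⟨(a:ℕ)+m+1, by omega⟩ : ℕ+)) m) = ENNReal.ofReal (q ^ (a:ℕ)) := by
    rw [tsum_congr h1, ← ENNReal.ofReal_tsum_of_nonneg (fun m => by positivity) ?_]
    · congr 1
      have h2 : ∀ m : ℕ, p * q ^ ((a:ℕ)+m) = (p * q ^ (a:ℕ)) * q ^ m := fun m => by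
        rw [pow_add]; ring
      rw [tsum_congr h2, tsum_mul_left, tsum_geometric_of_lt_one hq0 hq1, hpq]
      field_simp
    · have : Summable (fun m : ℕ => (p * q ^ (a:ℕ)) * q ^ m) :=
        (summable_geometric_of_lt_one hq0 hq1).mul_left _
      exact this.congr fun m => by rw [pow_add]; ring
  exact key.symm.trans hnat

lemma tsum_triple :
    ∑' (a : ℕ+) (b : ℕ+) (c : ℕ+), (spG p q a * (spG p q b * spG p q c)) *
      (if ((a:ℕ) < (b:ℕ) ∧ (a:ℕ) = (c:ℕ)) then 1 else 0)
      = ENNReal.ofReal (p^2*q/(1-q^3)) := by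
  have hc : ∀ a b : ℕ+, ∑' c : ℕ+, (spG p q a * (spG p q b * spG p q c)) *
      (if ((a:ℕ) < (b:ℕ) ∧ (a:ℕ) = (c:ℕ)) then 1 else 0)
      = spG p q a * spG p q a * (if a < b then spG p q b else 0) := by
    intro a b
    have : ∀ c : ℕ+, (spG p q a * (spG p q b * spG p q c)) *
        (if ((a:ℕ) < (b:ℕ) ∧ (a:ℕ) = (c:ℕ)) then 1 else 0)
        = if c = a then spG p q a * spG p q a * (if a < b then spG p q b else 0) else 0 := by
      intro c
      by_cases hca : c = a
      · subst hca
        by_cases hab : c < b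
        · rw [if_pos rfl, if_pos ⟨hab, rfl⟩, if_pos hab]; ring
        · rw [if_pos rfl, if_neg (fun h => hab h.1), if_neg hab, mul_zero,
            mul_zero]
      · rw [if_neg hca, if_neg (by rintro ⟨-, h⟩; exact hca (PNat.coe_injective h.symm)),
          mul_zero]
    rw [tsum_congr this, tsum_ite_eq]
  rw [tsum_congr fun a => tsum_congr (hc a)]
  have hb : ∀ a : ℕ+, ∑' b : ℕ+, spG p q a * spG p q a * (if a < b then spG p q b else 0)
      = spG p q a * spG p q a * ENNReal.ofReal (q ^ (a:ℕ)) := by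
    intro a
    rw [ENNReal.tsum_mul_left, tsum_spG_gt hp hq0 hq1 hpq]
  rw [tsum_congr hb]
  have ha : ∀ a : ℕ+, spG p q a * spG p q a * ENNReal.ofReal (q ^ (a:ℕ))
      = ENNReal.ofReal (p^2*q * (q^3) ^ ((a:ℕ) - 1)) := by
    intro a
    rw [spG, ← ENNReal.ofReal_mul (by positivity), ← ENNReal.ofReal_mul (by positivity)]
    congr 1
    obtain ⟨t, ht⟩ : ∃ t, (a:ℕ) = t + 1 := ⟨(a:ℕ) - 1, by have h := a.pos; omega⟩
    rw [ht]
    simp only [Nat.add_sub_cancel]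
    rw [← pow_mul]
    ring
  rw [tsum_congr ha, ← Equiv.tsum_eq Equiv.pnatEquivNat.symm]
  have h1 : ∀ m : ℕ, ENNReal.ofReal (p^2*q * (q^3) ^ (((Equiv.pnatEquivNat.symm m : ℕ+) : ℕ) - 1))
      = ENNReal.ofReal (p^2*q * (q^3) ^ m) := by
    intro m
    simp [Equiv.pnatEquivNat]
  have hq3 : q^3 < 1 := pow_lt_one₀ hq0 hq1 (by norm_num)
  rw [tsum_congr h1, ← ENNReal.ofReal_tsum_of_nonneg (fun m => by positivity)
    ((summable_geometric_of_lt_one (by positivity) hq3).mul_left _)]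
  rw [tsum_mul_left, tsum_geometric_of_lt_one (by positivity) hq3]
  rw [div_eq_mul_inv]

lemma tsum_SP : ∀ k : ℕ, ∑' w : Fin (k+2) → ℕ+,
    spW p q w * (spL (List.ofFn fun i => ((w i : ℕ))) : ℝ≥0∞)
    = (k : ℝ≥0∞) * ENNReal.ofReal (p^2*q/(1-q^3)) := by
  intro k
  induction k with
  | zero =>
      have h0 : ∀ w : Fin 2 → ℕ+, spW p q w * (spL (List.ofFn fun i => ((w i : ℕ))) : ℝ≥0∞)
          = 0 := fun w => by rw [spL_two]; simp
      rw [tsum_congr h0]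
      simp
  | succ k ih =>
      have hcomp : ∀ (a : ℕ+) (v : Fin (k+2) → ℕ+),
          (fun i : Fin (k+3) => (((Fin.cons a v : Fin (k+3) → ℕ+) i : ℕ+) : ℕ))
            = (Fin.cons (a:ℕ) (fun i => (v i : ℕ)) : Fin (k+3) → ℕ) := by
        intro a v
        funext i
        refine Fin.cases ?_ ?_ i
        · simp
        · intro j; simp
      have hsummand : ∀ (a : ℕ+) (v : Fin (k+2) → ℕ+),
          spW p q (Fin.cons a v) *
            (spL (List.ofFn fun i => (((Fin.cons a v : Fin (k+3) → ℕ+) i : ℕ+) : ℕ)) : ℝ≥0∞)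
          = spG p q a * (spW p q v * (spL (List.ofFn fun i => ((v i : ℕ))) : ℝ≥0∞))
            + (spG p q a * spW p q v) *
              (if ((a:ℕ) < ((v 0 : ℕ+):ℕ) ∧ (a:ℕ) = ((v 1 : ℕ+):ℕ)) then 1 else 0) := by
        intro a v
        rw [hcomp a v]
        simp only [spL_cons, spW_cons]
        push_cast
        by_cases hP : ((a:ℕ) < ((v 0 : ℕ+):ℕ) ∧ (a:ℕ) = ((v 1 : ℕ+):ℕ))
        · ring
        · ring
      have hu : ∀ a b : ℕ+, ∑' u : Fin (k+1) → ℕ+,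
          (spG p q a * (spG p q b * spW p q u)) *
            (if ((a:ℕ) < (b:ℕ) ∧ (a:ℕ) = ((u 0 : ℕ+):ℕ)) then 1 else 0)
          = ∑' c : ℕ+, (spG p q a * (spG p q b * spG p q c)) *
            (if ((a:ℕ) < (b:ℕ) ∧ (a:ℕ) = (c:ℕ)) then 1 else 0) := by
        intro a b
        rw [tsum_peel]
        apply tsum_congr; intro c
        have h2 : ∀ t : Fin k → ℕ+,
            (spG p q a * (spG p q b * spW p q (Fin.cons c t))) *
              (if ((a:ℕ) < (b:ℕ) ∧ (a:ℕ) = (((Fin.cons c t : Fin (k+1) → ℕ+) 0 : ℕ+):ℕ))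
                then 1 else 0)
            = ((spG p q a * (spG p q b * spG p q c)) *
              (if ((a:ℕ) < (b:ℕ) ∧ (a:ℕ) = (c:ℕ)) then 1 else 0)) * spW p q t := by
          intro t
          rw [spW_cons, Fin.cons_zero]
          ring
        rw [tsum_congr h2, ENNReal.tsum_mul_left, tsum_spW hp hq0 hq1 hpq k, mul_one]
      have hbv : ∀ a : ℕ+, ∑' v : Fin (k+2) → ℕ+, (spG p q a * spW p q v) *
          (if ((a:ℕ) < ((v 0 : ℕ+):ℕ) ∧ (a:ℕ) = ((v 1 : ℕ+):ℕ)) then 1 else 0)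
          = ∑' (b : ℕ+) (c : ℕ+), (spG p q a * (spG p q b * spG p q c)) *
            (if ((a:ℕ) < (b:ℕ) ∧ (a:ℕ) = (c:ℕ)) then 1 else 0) := by
        intro a
        rw [tsum_peel]
        apply tsum_congr; intro b
        have h1 : ∀ u : Fin (k+1) → ℕ+, (spG p q a * spW p q (Fin.cons b u)) *
            (if ((a:ℕ) < (((Fin.cons b u : Fin (k+2) → ℕ+) 0 : ℕ+):ℕ) ∧
                (a:ℕ) = (((Fin.cons b u : Fin (k+2) → ℕ+) 1 : ℕ+):ℕ))
              then 1 else 0)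
            = (spG p q a * (spG p q b * spW p q u)) *
              (if ((a:ℕ) < (b:ℕ) ∧ (a:ℕ) = ((u 0 : ℕ+):ℕ)) then 1 else 0) := by
          intro u
          rw [spW_cons, Fin.cons_zero, ← Fin.succ_zero_eq_one, Fin.cons_succ, mul_assoc]
        rw [tsum_congr h1]
        exact hu a b
      rw [tsum_peel, tsum_congr fun a => tsum_congr fun v => hsummand a v,
        tsum_congr fun a => ENNReal.tsum_add, ENNReal.tsum_add]
      have hS1 : ∑' (a : ℕ+) (v : Fin (k+2) → ℕ+),
          spG p q a * (spW p q v * (spL (List.ofFn fun i => ((v i : ℕ))) : ℝ≥0∞))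
          = (k : ℝ≥0∞) * ENNReal.ofReal (p^2*q/(1-q^3)) := by
        rw [tsum_congr fun a => ENNReal.tsum_mul_left,
          tsum_congr fun a => by rw [ih], ENNReal.tsum_mul_right, tsum_spG hp hq0 hq1 hpq,
          one_mul]
      have hS2 : ∑' (a : ℕ+) (v : Fin (k+2) → ℕ+), (spG p q a * spW p q v) *
          (if ((a:ℕ) < ((v 0 : ℕ+):ℕ) ∧ (a:ℕ) = ((v 1 : ℕ+):ℕ)) then 1 else 0)
          = ENNReal.ofReal (p^2*q/(1-q^3)) := by
        rw [tsum_congr hbv]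
        exact tsum_triple hp hq0 hq1 hpq
      rw [hS1, hS2]
      push_cast
      ring

end params

/-- For `0 < p ≤ 1`, `q = 1 − p`, and `n ≥ 2`, the expected number of symmetric peaks in
a sample of `n` geometric random variables is `p²q(n−2)/(1−q³)`; the sum over all words
converges (absolutely, as all terms are nonnegative). -/
theorem expected_symmetric_peaks (p q : ℝ) (hp : 0 < p) (hp1 : p ≤ 1) (hq : q = 1 - p)
    (n : ℕ) (hn : 2 ≤ n) :
    Summable (fun w : Fin n → ℕ+ =>
      wordP p q w * (spL (List.ofFn fun i => (w i : ℕ)) : ℝ)) ∧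
    ∑' w : Fin n → ℕ+, wordP p q w * (spL (List.ofFn fun i => (w i : ℕ)) : ℝ)
      = p ^ 2 * q / (1 - q ^ 3) * ((n : ℝ) - 2) := by
  have hq0 : 0 ≤ q := by rw [hq]; linarith
  have hq1 : q < 1 := by rw [hq]; linarith
  have hpq : 1 - q = p := by rw [hq]; ring
  have hq3 : q ^ 3 < 1 := pow_lt_one₀ hq0 hq1 (by norm_num)
  have h3 : 0 < 1 - q ^ 3 := by linarith
  obtain ⟨k, rfl⟩ : ∃ k, n = k + 2 := ⟨n - 2, by omega⟩
  set f : (Fin (k+2) → ℕ+) → ℝ :=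
    fun w => wordP p q w * (spL (List.ofFn fun i => (w i : ℕ)) : ℝ) with hf
  have hwnonneg : ∀ w : Fin (k+2) → ℕ+, 0 ≤ wordP p q w := fun w =>
    Finset.prod_nonneg fun i _ => by positivity
  have hfnonneg : ∀ w, 0 ≤ f w := fun w => mul_nonneg (hwnonneg w) (Nat.cast_nonneg _)
  have hofReal : ∀ w, ENNReal.ofReal (f w)
      = spW p q w * (spL (List.ofFn fun i => (w i : ℕ)) : ℝ≥0∞) := by
    intro w
    rw [hf, ENNReal.ofReal_mul (hwnonneg w), ENNReal.ofReal_natCast]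
    congr 1
    rw [wordP, ENNReal.ofReal_prod_of_nonneg (fun i _ => by positivity)]
    rfl
  have hsum : ∑' w, ENNReal.ofReal (f w) = (k:ℝ≥0∞) * ENNReal.ofReal (p^2*q/(1-q^3)) := by
    rw [tsum_congr hofReal]
    exact tsum_SP hp hq0 hq1 hpq k
  have hne : ∑' w, ENNReal.ofReal (f w) ≠ ⊤ := by
    rw [hsum]
    exact ENNReal.mul_ne_top (ENNReal.natCast_ne_top k) ENNReal.ofReal_ne_top
  have hsummable : Summable f := by
    have h := ENNReal.summable_toReal hne
    exact h.congr fun w => ENNReal.toReal_ofReal (hfnonneg w)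
  refine ⟨hsummable, ?_⟩
  have htsum : ∑' w, f w = ((k:ℝ≥0∞) * ENNReal.ofReal (p^2*q/(1-q^3))).toReal := by
    rw [← hsum, ENNReal.tsum_toReal_eq (fun w => ENNReal.ofReal_ne_top)]
    exact tsum_congr fun w => (ENNReal.toReal_ofReal (hfnonneg w)).symm
  rw [htsum, ENNReal.toReal_mul, ENNReal.toReal_natCast,
    ENNReal.toReal_ofReal (div_nonneg (by positivity) h3.le)]
  push_cast
  ring
end
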